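/- arXiv:2512.18023 — 2 statements merged into one kernel-verified Lean document; each statement's English description precedes it below -/
import Mathlib

section
/- If Y has the λ-bounded approximation property and every operator u : K → Y extends to P with norm ≤ C‖u‖ (where K ⊆ P are Banach spaces), then every finite-rank operator u : K → Y admits a finite-rank extension ũ : P → Y with ‖ũ‖ ≤ (λ+ε)C‖u‖ for every ε > 0; consequently every compact operator K → Y admits a compact extension to P. -/
open Metric Set Filter

lemma opNorm_le_of_unitball {E F : Type*} [NormedAddCommGroup E] [NormedSpace ℝ E]
    [NormedAddCommGroup F] [NormedSpace ℝ F] (f : E →L[ℝ] F) {M : ℝ} (hM : 0 ≤ M)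
    (h : ∀ x : E, ‖x‖ ≤ 1 → ‖f x‖ ≤ M) : ‖f‖ ≤ M := by
  refine f.opNorm_le_bound' hM fun x hx => ?_
  have hx' : (0:ℝ) < ‖x‖ := lt_of_le_of_ne (norm_nonneg x) (Ne.symm hx)
  have := h (‖x‖⁻¹ • x) (by rw [norm_smul, norm_inv, norm_norm]; exact le_of_eq (inv_mul_cancel₀ (ne_of_gt hx')))
  rw [map_smul, norm_smul, norm_inv, norm_norm] at this
  calc ‖f x‖ = ‖x‖ * (‖x‖⁻¹ * ‖f x‖) := by field_simp
    _ ≤ ‖x‖ * M := by gcongr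
    _ = M * ‖x‖ := mul_comm _ _

lemma finiteRank_isCompactOperator {E Y : Type*} [NormedAddCommGroup E] [NormedSpace ℝ E]
    [NormedAddCommGroup Y] [NormedSpace ℝ Y] (u : E →L[ℝ] Y)
    (h : FiniteDimensional ℝ (LinearMap.range (u : E →ₗ[ℝ] Y))) : IsCompactOperator u := by
  set R := LinearMap.range (u : E →ₗ[ℝ] Y)
  haveI := h
  haveI : ProperSpace R := FiniteDimensional.proper ℝ R
  refine ⟨(↑) '' Metric.closedBall (0:R) ‖u‖, (isCompact_closedBall _ _).image continuous_subtype_val, ?_⟩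
  refine Filter.mem_of_superset (Metric.closedBall_mem_nhds (0:E) one_pos) ?_
  intro x hx
  simp only [Metric.mem_closedBall, dist_zero_right] at hx
  refine ⟨⟨u x, LinearMap.mem_range_self _ x⟩, ?_, rfl⟩
  simp only [Metric.mem_closedBall, dist_zero_right]
  calc ‖(⟨u x, LinearMap.mem_range_self _ x⟩ : R)‖ = ‖u x‖ := rfl
    _ ≤ ‖u‖ * ‖x‖ := u.le_opNorm x
    _ ≤ ‖u‖ * 1 := by gcongr
    _ = ‖u‖ := mul_one _

set_option maxHeartbeats 1000000 in
/-- If `Y` has the `λ`-bounded approximation property and every operator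
`u : K → Y` extends to `P` with norm `≤ C‖u‖`, then every finite-rank operator
`u : K → Y` has a finite-rank extension of norm `≤ (λ+ε)C‖u‖` for every
`ε > 0`; consequently every compact operator `K → Y` admits a compact
extension to `P`. -/
theorem finite_rank_and_compact_extension
    {P Y : Type*}
    [NormedAddCommGroup P] [NormedSpace ℝ P] [CompleteSpace P]
    [NormedAddCommGroup Y] [NormedSpace ℝ Y] [CompleteSpace Y]
    (K : Submodule ℝ P) (hK : IsClosed (K : Set P))
    (lam C : ℝ) (hlam : 1 ≤ lam) (hC : 0 < C)
    (hAP : ∀ (F : Submodule ℝ Y), FiniteDimensional ℝ F → ∀ ε > (0 : ℝ),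
      ∃ f : Y →L[ℝ] Y,
        FiniteDimensional ℝ (LinearMap.range (f : Y →ₗ[ℝ] Y)) ∧
        ‖f‖ ≤ lam + ε ∧ ∀ y ∈ F, f y = y)
    (hext : ∀ u : K →L[ℝ] Y,
      ∃ v : P →L[ℝ] Y, (∀ k : K, v k = u k) ∧ ‖v‖ ≤ C * ‖u‖) :
    (∀ ε > (0 : ℝ), ∀ u : K →L[ℝ] Y,
      FiniteDimensional ℝ (LinearMap.range (u : K →ₗ[ℝ] Y)) →
      ∃ v : P →L[ℝ] Y,
        FiniteDimensional ℝ (LinearMap.range (v : P →ₗ[ℝ] Y)) ∧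
        (∀ k : K, v k = u k) ∧ ‖v‖ ≤ (lam + ε) * C * ‖u‖) ∧
    (∀ u : K →L[ℝ] Y, IsCompactOperator u →
      ∃ v : P →L[ℝ] Y, IsCompactOperator v ∧ ∀ k : K, v k = u k) := by
  -- Part 1: finite-rank extension
  have part1 : ∀ ε > (0 : ℝ), ∀ u : K →L[ℝ] Y,
      FiniteDimensional ℝ (LinearMap.range (u : K →ₗ[ℝ] Y)) →
      ∃ v : P →L[ℝ] Y,
        FiniteDimensional ℝ (LinearMap.range (v : P →ₗ[ℝ] Y)) ∧
        (∀ k : K, v k = u k) ∧ ‖v‖ ≤ (lam + ε) * C * ‖u‖ := by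
    intro ε hε u hu
    obtain ⟨v0, hv0k, hv0n⟩ := hext u
    obtain ⟨f, hf_fd, hf_n, hf_id⟩ := hAP (LinearMap.range (u : K →ₗ[ℝ] Y)) hu ε hε
    haveI := hf_fd
    refine ⟨f.comp v0, ?_, ?_, ?_⟩
    · refine Submodule.finiteDimensional_of_le (S₂ := LinearMap.range (f : Y →ₗ[ℝ] Y)) ?_
      exact LinearMap.range_comp_le_range (v0 : P →ₗ[ℝ] Y) (f : Y →ₗ[ℝ] Y)
    · intro k
      have : (f.comp v0) k = f (v0 k) := rfl
      rw [this, hv0k k]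
      exact hf_id _ (LinearMap.mem_range_self _ k)
    · calc ‖f.comp v0‖ ≤ ‖f‖ * ‖v0‖ := f.opNorm_comp_le v0
        _ ≤ (lam + ε) * (C * ‖u‖) :=
            mul_le_mul hf_n hv0n (norm_nonneg _) (by linarith)
        _ = (lam + ε) * C * ‖u‖ := (mul_assoc _ _ _).symm
  refine ⟨part1, ?_⟩
  -- approximation of compact operators by finite-rank operators
  have approx : ∀ δ > (0:ℝ), ∀ u : K →L[ℝ] Y, IsCompactOperator u →
      ∃ g : K →L[ℝ] Y, FiniteDimensional ℝ (LinearMap.range (g : K →ₗ[ℝ] Y)) ∧ ‖u - g‖ ≤ δ := by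
    intro δ hδ u hu
    have hpos : (0:ℝ) < lam + 2 := by linarith
    set δ' : ℝ := δ / (lam + 2) with hδ'def
    have hδ'pos : 0 < δ' := div_pos hδ hpos
    have hcc : IsCompact (closure ((u : K →ₗ[ℝ] Y) '' Metric.closedBall 0 1)) :=
      IsCompactOperator.isCompact_closure_image_closedBall (f := (u : K →ₗ[ℝ] Y)) hu 1
    obtain ⟨t, ht_fin, ht_cov⟩ := Metric.totallyBounded_iff.mp hcc.totallyBounded δ' hδ'pos
    obtain ⟨f, hf_fd, hf_n, hf_id⟩ := hAP (Submodule.span ℝ t)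
      (FiniteDimensional.span_of_finite ℝ ht_fin) 1 one_pos
    haveI := hf_fd
    refine ⟨f.comp u, ?_, ?_⟩
    · refine Submodule.finiteDimensional_of_le (S₂ := LinearMap.range (f : Y →ₗ[ℝ] Y)) ?_
      exact LinearMap.range_comp_le_range (u : K →ₗ[ℝ] Y) (f : Y →ₗ[ℝ] Y)
    · refine opNorm_le_of_unitball _ (le_of_lt hδ) fun x hx => ?_
      have hux : u x ∈ ⋃ y ∈ t, Metric.ball y δ' :=
        ht_cov (subset_closure ⟨x, by simpa [Metric.mem_closedBall, dist_zero_right] using hx, rfl⟩)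
      obtain ⟨y, hyt, hy⟩ := Set.mem_iUnion₂.mp hux
      rw [Metric.mem_ball, dist_eq_norm] at hy
      have hfy : f y = y := hf_id y (Submodule.subset_span hyt)
      have key : (u - f.comp u) x = (u x - y) - f (u x - y) := by
        simp only [ContinuousLinearMap.sub_apply, ContinuousLinearMap.comp_apply, map_sub, hfy]
        abel
      rw [key]
      calc ‖(u x - y) - f (u x - y)‖ ≤ ‖u x - y‖ + ‖f (u x - y)‖ := norm_sub_le _ _
        _ ≤ δ' + ‖f‖ * ‖u x - y‖ := add_le_add (le_of_lt hy) (f.le_opNorm _)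
        _ ≤ δ' + (lam + 1) * δ' :=
            add_le_add le_rfl
              (mul_le_mul hf_n (le_of_lt hy) (norm_nonneg _) (by linarith))
        _ = (lam + 2) * δ' := by ring
        _ = δ := by rw [hδ'def]; field_simp [hpos.ne']
  -- Part 2
  intro u hu
  have h1 : ∀ n : ℕ, ∃ g : K →L[ℝ] Y,
      FiniteDimensional ℝ (LinearMap.range (g : K →ₗ[ℝ] Y)) ∧ ‖u - g‖ ≤ (1/2:ℝ)^n :=
    fun n => approx _ (by positivity) u hu
  choose g hg1 hg2 using h1
  set d : ℕ → K →L[ℝ] Y := fun n => g (n+1) - g n with hd_def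
  have hd_fd : ∀ n, FiniteDimensional ℝ (LinearMap.range ((d n : K →ₗ[ℝ] Y))) := by
    intro n
    haveI := hg1 (n+1); haveI := hg1 n
    refine Submodule.finiteDimensional_of_le
      (S₂ := LinearMap.range (g (n+1) : K →ₗ[ℝ] Y) ⊔ LinearMap.range (g n : K →ₗ[ℝ] Y)) ?_
    rintro _ ⟨x, rfl⟩
    exact Submodule.sub_mem _ (Submodule.mem_sup_left (LinearMap.mem_range_self _ x))
      (Submodule.mem_sup_right (LinearMap.mem_range_self _ x))
  have hd_norm : ∀ n, ‖d n‖ ≤ 2 * (1/2:ℝ)^n := by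
    intro n
    refine opNorm_le_of_unitball _ (by positivity) fun x hx => ?_
    have hux : ∀ m, ‖u x - g m x‖ ≤ (1/2:ℝ)^m := by
      intro m
      calc ‖u x - g m x‖ = ‖(u - g m) x‖ := by rw [ContinuousLinearMap.sub_apply]
        _ ≤ ‖u - g m‖ * ‖x‖ := (u - g m).le_opNorm x
        _ ≤ (1/2:ℝ)^m * 1 := mul_le_mul (hg2 m) hx (norm_nonneg _) (by positivity)
        _ = (1/2:ℝ)^m := mul_one _
    have hdx : d n x = (g (n+1) x - u x) + (u x - g n x) := by
      rw [hd_def]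
      simp only [ContinuousLinearMap.sub_apply]
      abel
    rw [hdx]
    calc ‖(g (n+1) x - u x) + (u x - g n x)‖ ≤ ‖g (n+1) x - u x‖ + ‖u x - g n x‖ :=
        norm_add_le _ _
      _ ≤ (1/2:ℝ)^(n+1) + (1/2:ℝ)^n :=
          add_le_add (by rw [norm_sub_rev]; exact hux (n+1)) (hux n)
      _ ≤ 2 * (1/2:ℝ)^n := by
          rw [pow_succ]
          nlinarith [pow_pos (by norm_num : (0:ℝ) < 1/2) n]
  have hw' : ∀ n, ∃ w : P →L[ℝ] Y,
      FiniteDimensional ℝ (LinearMap.range (w : P →ₗ[ℝ] Y)) ∧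
      (∀ k : K, w k = d n k) ∧ ‖w‖ ≤ (lam + 1) * C * ‖d n‖ :=
    fun n => part1 1 one_pos (d n) (hd_fd n)
  choose w hw1 hw2 hw3 using hw'
  obtain ⟨w0, hw01, hw02, _⟩ := part1 1 one_pos (g 0) (hg1 0)
  have hlamC : (0:ℝ) ≤ (lam + 1) * C := by positivity
  have hsum : Summable w := by
    refine Summable.of_norm_bounded (g := fun n => ((lam+1)*C*2) * (1/2:ℝ)^n)
      (summable_geometric_two.mul_left _) fun n => ?_
    calc ‖w n‖ ≤ (lam + 1) * C * ‖d n‖ := hw3 n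
      _ ≤ (lam + 1) * C * (2 * (1/2:ℝ)^n) := by
          exact mul_le_mul_of_nonneg_left (hd_norm n) hlamC
      _ = ((lam+1)*C*2) * (1/2:ℝ)^n := by ring
  set v : P →L[ℝ] Y := w0 + ∑' n, w n with hv_def
  set S : ℕ → P →L[ℝ] Y := fun N => w0 + ∑ n ∈ Finset.range N, w n with hS_def
  have hStendsto : Tendsto S atTop (nhds v) := by
    rw [hv_def]
    exact tendsto_const_nhds.add hsum.hasSum.tendsto_sum_nat
  have hScompact : ∀ N, IsCompactOperator (S N) := by
    intro N
    induction N with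
    | zero =>
        have : S 0 = w0 := by simp [hS_def]
        rw [this]
        exact finiteRank_isCompactOperator w0 hw01
    | succ N ih =>
        have : S (N+1) = S N + w N := by
          simp only [hS_def, Finset.sum_range_succ]; abel
        rw [this, ContinuousLinearMap.coe_add']
        exact ih.add (finiteRank_isCompactOperator (w N) (hw1 N))
  refine ⟨v, isCompactOperator_of_tendsto hStendsto (Filter.Eventually.of_forall hScompact), ?_⟩
  intro k
  have hSk : ∀ N, S N (k : P) = g N k := by
    intro N
    have : S N (k : P) = w0 (k : P) + ∑ n ∈ Finset.range N, w n (k : P) := by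
      simp [hS_def]
    rw [this, hw02 k]
    have hsum_eq : ∑ n ∈ Finset.range N, w n (k : P)
        = ∑ n ∈ Finset.range N, (g (n+1) k - g n k) := by
      refine Finset.sum_congr rfl fun n _ => ?_
      rw [hw2 n k]
      simp [hd_def]
    rw [hsum_eq, Finset.sum_range_sub (fun n => g n k)]
    abel
  have h_to_vk : Tendsto (fun N => S N (k : P)) atTop (nhds (v (k : P))) :=
    ((ContinuousLinearMap.apply ℝ Y (k : P)).continuous.tendsto v).comp hStendsto
  have h_to_uk : Tendsto (fun N => S N (k : P)) atTop (nhds (u k)) := by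
    simp only [hSk]
    rw [tendsto_iff_norm_sub_tendsto_zero]
    have hbound : ∀ N, ‖g N k - u k‖ ≤ (1/2:ℝ)^N * ‖k‖ := by
      intro N
      have : g N k - u k = -((u - g N) k) := by
        simp [ContinuousLinearMap.sub_apply]
      rw [this, norm_neg]
      calc ‖(u - g N) k‖ ≤ ‖u - g N‖ * ‖k‖ := (u - g N).le_opNorm k
        _ ≤ (1/2:ℝ)^N * ‖k‖ := by gcongr; exact hg2 N
    refine squeeze_zero (fun N => norm_nonneg _) hbound ?_
    have : Tendsto (fun N : ℕ => (1/2:ℝ)^N) atTop (nhds 0) :=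
      tendsto_pow_atTop_nhds_zero_of_lt_one (by norm_num) (by norm_num)
    simpa using this.mul_const ‖k‖
  exact tendsto_nhds_unique h_to_vk h_to_uk
end

section
/- If Y is complemented in its bidual (an ultrasummand) via a projection π : Y** → Y, K is a closed subspace of the Banach space P, and there is a constant C such that every compact operator u : K → Y with finite-rank-composed form f∘u extends to P with norm ≤ C‖f∘u‖, then every bounded operator u : K → Y admits a bounded extension ũ : P → Y: one takes a weak*-ultrafilter limit ũ(x) = π( w*-lim_𝒰 δ(u_F(x)) ) of extensions u_F of f_F∘u over finite-dimensional subspaces F of Y, where (f_F) witnesses the BAP of Y. -/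
open NormedSpace

section Aux

/-- Finite-dimensional subspaces of `Y`. -/
def FDSub (Y : Type*) [AddCommGroup Y] [Module ℝ Y] : Type _ :=
  {F : Submodule ℝ Y // FiniteDimensional ℝ F}

variable {Y : Type*} [AddCommGroup Y] [Module ℝ Y]

instance : Nonempty (FDSub Y) := ⟨⟨⊥, inferInstance⟩⟩

instance : SemilatticeSup (FDSub Y) where
  le F G := F.1 ≤ G.1
  le_refl F := le_refl F.1
  le_trans F G H h1 h2 := show F.1 ≤ H.1 from
    le_trans (show F.1 ≤ G.1 from h1) (show G.1 ≤ H.1 from h2)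
  le_antisymm F G h1 h2 := Subtype.ext
    (le_antisymm (show F.1 ≤ G.1 from h1) (show G.1 ≤ F.1 from h2))
  sup F G := ⟨F.1 ⊔ G.1, by haveI := F.2; haveI := G.2; infer_instance⟩
  le_sup_left F G := show F.1 ≤ F.1 ⊔ G.1 from le_sup_left
  le_sup_right F G := show G.1 ≤ F.1 ⊔ G.1 from le_sup_right
  sup_le F G H h1 h2 := show F.1 ⊔ G.1 ≤ H.1 from sup_le h1 h2

lemma FDSub.le_iff {F G : FDSub Y} : F ≤ G ↔ F.1 ≤ G.1 := ⟨fun h => h, fun h => h⟩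

end Aux

/-- A continuous linear map with finite-dimensional range is a compact operator. -/
lemma isCompactOperator_of_fd_range {X Y : Type*}
    [NormedAddCommGroup X] [NormedSpace ℝ X] [NormedAddCommGroup Y] [NormedSpace ℝ Y]
    (f : X →L[ℝ] Y) (h : FiniteDimensional ℝ (LinearMap.range (f : X →ₗ[ℝ] Y))) :
    IsCompactOperator f := by
  haveI := h
  set R : Submodule ℝ Y := LinearMap.range (f : X →ₗ[ℝ] Y)
  refine ⟨(Subtype.val '' Metric.closedBall (0 : R) ‖f‖),
    (isCompact_closedBall _ _).image continuous_subtype_val, ?_⟩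
  refine Filter.mem_of_superset (Metric.closedBall_mem_nhds 0 one_pos) ?_
  intro x hx
  have hmem : f x ∈ R := LinearMap.mem_range_self _ x
  refine ⟨⟨f x, hmem⟩, ?_, rfl⟩
  rw [Metric.mem_closedBall, dist_zero_right]
  show ‖f x‖ ≤ ‖f‖
  calc ‖f x‖ ≤ ‖f‖ * ‖x‖ := f.le_opNorm x
    _ ≤ ‖f‖ * 1 := by
        exact mul_le_mul_of_nonneg_left (by simpa [dist_zero_right] using hx) (norm_nonneg f)
    _ = ‖f‖ := mul_one _

/-- Bounded real functions have limits along ultrafilters. -/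
lemma exists_ultra_lim {ι : Type*} (𝒰 : Ultrafilter ι) (g : ι → ℝ) (b : ℝ)
    (hg : ∀ i, |g i| ≤ b) : ∃ c, Filter.Tendsto g 𝒰 (nhds c) := by
  have hmem : Set.Icc (-b) b ∈ Ultrafilter.map g 𝒰 :=
    Filter.mem_map.2 (Filter.univ_mem' fun i => Set.mem_Icc.2 (abs_le.1 (hg i)))
  obtain ⟨c, -, hle⟩ := (isCompact_Icc (a := -b) (b := b)).ultrafilter_le_nhds
    (Ultrafilter.map g 𝒰) (Filter.le_principal_iff.2 hmem)
  exact ⟨c, hle⟩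

/-- If `Y` is an ultrasummand (complemented in its bidual via a projection `π`),
`Y` has the `λ`-AP, `K` is a closed subspace of `P`, and there is a constant
`C` such that every compact operator `K → Y` extends to `P` with norm control
`C`, then every bounded operator `u : K → Y` admits a bounded extension
`ũ : P → Y` with `ũ|_K = u` and `‖ũ‖ ≤ ‖π‖·C·(λ+ε)·‖u‖` for every `ε > 0`. -/
theorem ultrasummand_bounded_extension
    {P Y : Type*}
    [NormedAddCommGroup P] [NormedSpace ℝ P] [CompleteSpace P]
    [NormedAddCommGroup Y] [NormedSpace ℝ Y] [CompleteSpace Y]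
    (K : Submodule ℝ P) (hK : IsClosed (K : Set P))
    (π : StrongDual ℝ (StrongDual ℝ Y) →L[ℝ] Y)
    (hπ : ∀ y : Y, π (inclusionInDoubleDual ℝ Y y) = y)
    (lam C : ℝ) (hlam : 1 ≤ lam) (hC : 0 < C)
    (hAP : ∀ (F : Submodule ℝ Y), FiniteDimensional ℝ F → ∀ ε > (0 : ℝ),
      ∃ f : Y →L[ℝ] Y,
        FiniteDimensional ℝ (LinearMap.range (f : Y →ₗ[ℝ] Y)) ∧
        ‖f‖ ≤ lam + ε ∧ ∀ y ∈ F, f y = y)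
    (hext : ∀ v : K →L[ℝ] Y, IsCompactOperator v →
      ∃ w : P →L[ℝ] Y, (∀ k : K, w k = v k) ∧ ‖w‖ ≤ C * ‖v‖) :
    ∀ u : K →L[ℝ] Y, ∀ ε > (0 : ℝ),
      ∃ v : P →L[ℝ] Y, (∀ k : K, v k = u k) ∧
        ‖v‖ ≤ @norm _ (ContinuousLinearMap.hasOpNorm (𝕜 := ℝ) (𝕜₂ := ℝ) (σ₁₂ := RingHom.id ℝ)
          (E := StrongDual ℝ (StrongDual ℝ Y)) (F := Y)) π * C * (lam + ε) * ‖u‖ := by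
  intro u ε hε
  letI : SeminormedAddCommGroup (StrongDual ℝ (StrongDual ℝ Y) →L[ℝ] Y) :=
    ContinuousLinearMap.toSeminormedAddCommGroup (𝕜 := ℝ) (𝕜₂ := ℝ) (σ₁₂ := RingHom.id ℝ)
      (E := StrongDual ℝ (StrongDual ℝ Y)) (F := Y)
  -- the ultrafilter on finite-dimensional subspaces refining the order filter
  set 𝒰 : Ultrafilter (FDSub Y) := Ultrafilter.of Filter.atTop with h𝒰def
  have h𝒰 : (𝒰 : Filter (FDSub Y)) ≤ Filter.atTop := Ultrafilter.of_le _
  -- choose the AP witnesses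
  choose f hfd hfn hfid using fun F : FDSub Y => hAP F.1 F.2 ε hε
  -- the compositions `f F ∘ u` are compact
  have hcomp : ∀ F : FDSub Y, IsCompactOperator ((f F).comp u) := by
    intro F
    have h1 : IsCompactOperator (f F) := isCompactOperator_of_fd_range (f F) (hfd F)
    simpa [ContinuousLinearMap.coe_comp'] using h1.comp_clm u
  -- choose the extensions
  choose w hwk hwn using fun F : FDSub Y => hext ((f F).comp u) (hcomp F)
  set B : ℝ := C * ((lam + ε) * ‖u‖) with hBdef
  have hB0 : 0 ≤ B := by positivity
  have hB : ∀ F : FDSub Y, ‖w F‖ ≤ B := by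
    intro F
    calc ‖w F‖ ≤ C * ‖(f F).comp u‖ := hwn F
      _ ≤ C * ((lam + ε) * ‖u‖) := by
          refine mul_le_mul_of_nonneg_left ?_ hC.le
          calc ‖(f F).comp u‖ ≤ ‖f F‖ * ‖u‖ := ContinuousLinearMap.opNorm_comp_le _ _
            _ ≤ (lam + ε) * ‖u‖ := mul_le_mul_of_nonneg_right (hfn F) (norm_nonneg u)
  -- pointwise scalar bounds
  have hptb : ∀ (x : P) (φ : StrongDual ℝ Y) (F : FDSub Y),
      |φ (w F x)| ≤ ‖φ‖ * (B * ‖x‖) := by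
    intro x φ F
    calc |φ (w F x)| ≤ ‖φ‖ * ‖w F x‖ := φ.le_opNorm _
      _ ≤ ‖φ‖ * (B * ‖x‖) := by
          refine mul_le_mul_of_nonneg_left ?_ (norm_nonneg φ)
          calc ‖w F x‖ ≤ ‖w F‖ * ‖x‖ := (w F).le_opNorm x
            _ ≤ B * ‖x‖ := mul_le_mul_of_nonneg_right (hB F) (norm_nonneg x)
  -- ultrafilter limits of the scalar nets
  choose c hc using fun (x : P) (φ : StrongDual ℝ Y) =>
    exists_ultra_lim 𝒰 (fun F => φ (w F x)) (‖φ‖ * (B * ‖x‖)) (hptb x φ)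
  have hcb : ∀ (x : P) (φ : StrongDual ℝ Y), |c x φ| ≤ ‖φ‖ * (B * ‖x‖) := by
    intro x φ
    exact le_of_tendsto' ((hc x φ).abs) (fun F => hptb x φ F)
  have hc_addφ : ∀ (x : P) (φ ψ : StrongDual ℝ Y), c x (φ + ψ) = c x φ + c x ψ := by
    intro x φ ψ
    refine tendsto_nhds_unique (hc x (φ + ψ)) ?_
    simpa [ContinuousLinearMap.add_apply] using (hc x φ).add (hc x ψ)
  have hc_smulφ : ∀ (x : P) (a : ℝ) (φ : StrongDual ℝ Y), c x (a • φ) = a * c x φ := by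
    intro x a φ
    refine tendsto_nhds_unique (hc x (a • φ)) ?_
    simpa [ContinuousLinearMap.smul_apply, smul_eq_mul] using (hc x φ).const_mul a
  have hc_addx : ∀ (x y : P) (φ : StrongDual ℝ Y), c (x + y) φ = c x φ + c y φ := by
    intro x y φ
    refine tendsto_nhds_unique (hc (x + y) φ) ?_
    have : ∀ F : FDSub Y, φ (w F (x + y)) = φ (w F x) + φ (w F y) := by
      intro F; rw [map_add, map_add]
    simpa [this] using (hc x φ).add (hc y φ)
  have hc_smulx : ∀ (a : ℝ) (x : P) (φ : StrongDual ℝ Y), c (a • x) φ = a * c x φ := by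
    intro a x φ
    refine tendsto_nhds_unique (hc (a • x) φ) ?_
    have : ∀ F : FDSub Y, φ (w F (a • x)) = a * φ (w F x) := by
      intro F; rw [map_smul, map_smul, smul_eq_mul]
    simpa [this] using (hc x φ).const_mul a
  -- bundle into the double dual
  have hBx : ∀ x : P, 0 ≤ B * ‖x‖ := fun x => mul_nonneg hB0 (norm_nonneg x)
  let Φ : P → StrongDual ℝ (StrongDual ℝ Y) := fun x =>
    LinearMap.mkContinuous
      { toFun := c x
        map_add' := hc_addφ x
        map_smul' := fun a φ => hc_smulφ x a φ }
      (B * ‖x‖)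
      (fun φ => by
        rw [Real.norm_eq_abs, mul_comm]
        exact hcb x φ)
  have hΦ_apply : ∀ (x : P) (φ : StrongDual ℝ Y), Φ x φ = c x φ := fun x φ => rfl
  have hΦ_norm : ∀ x : P, ‖Φ x‖ ≤ B * ‖x‖ := fun x =>
    LinearMap.mkContinuous_norm_le _ (hBx x) _
  have hΦ_add : ∀ x y : P, Φ (x + y) = Φ x + Φ y := by
    intro x y
    ext φ
    simp only [ContinuousLinearMap.add_apply, hΦ_apply, hc_addx]
  have hΦ_smul : ∀ (a : ℝ) (x : P), Φ (a • x) = a • Φ x := by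
    intro a x
    ext φ
    simp only [ContinuousLinearMap.coe_smul', Pi.smul_apply, hΦ_apply, hc_smulx, smul_eq_mul]
  -- the extension
  let V : P →ₗ[ℝ] Y :=
    { toFun := fun x => π (Φ x)
      map_add' := fun x y => by
        show π (Φ (x + y)) = π (Φ x) + π (Φ y)
        rw [hΦ_add, map_add]
      map_smul' := fun a x => by
        show π (Φ (a • x)) = a • π (Φ x)
        rw [hΦ_smul, map_smul] }
  let v : P →L[ℝ] Y := LinearMap.mkContinuous V (‖π‖ * B) (fun x => by
    show ‖π (Φ x)‖ ≤ ‖π‖ * B * ‖x‖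
    calc ‖π (Φ x)‖ ≤ ‖π‖ * ‖Φ x‖ := 
        ContinuousLinearMap.le_opNorm (𝕜 := ℝ) (𝕜₂ := ℝ) (σ₁₂ := RingHom.id ℝ)
          (E := StrongDual ℝ (StrongDual ℝ Y)) (F := Y) π (Φ x)
      _ ≤ ‖π‖ * (B * ‖x‖) := mul_le_mul_of_nonneg_left (hΦ_norm x) (norm_nonneg π)
      _ = ‖π‖ * B * ‖x‖ := (mul_assoc _ _ _).symm)
  refine ⟨v, ?_, ?_⟩
  · -- agreement on `K`
    intro k
    have hΦk : Φ (k : P) = inclusionInDoubleDual ℝ Y (u k) := by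
      ext φ
      rw [hΦ_apply, dual_def]
      refine tendsto_nhds_unique (hc (k : P) φ) ?_
      have hFD : FiniteDimensional ℝ (Submodule.span ℝ {u k} : Submodule ℝ Y) :=
        inferInstance
      set F₀ : FDSub Y := ⟨Submodule.span ℝ {u k}, hFD⟩ with hF₀
      have hev : ∀ᶠ F in (𝒰 : Filter (FDSub Y)), φ (w F (k : P)) = φ (u k) := by
        refine Filter.Eventually.filter_mono h𝒰 ?_
        refine Filter.eventually_atTop.2 ⟨F₀, fun F hF => ?_⟩
        have h1 : w F (k : P) = f F (u k) := by
          have := hwk F k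
          simpa [ContinuousLinearMap.comp_apply] using this
        have h2 : u k ∈ F.1 := hF (Submodule.mem_span_singleton_self _)
        rw [h1, hfid F (u k) h2]
      exact Filter.Tendsto.congr' (Filter.EventuallyEq.symm hev) tendsto_const_nhds
    show π (Φ (k : P)) = u k
    rw [hΦk, hπ]
  · -- norm bound
    have h1 : ‖v‖ ≤ ‖π‖ * B :=
      LinearMap.mkContinuous_norm_le _ (mul_nonneg (norm_nonneg π) hB0) _
    calc ‖v‖ ≤ ‖π‖ * B := h1
      _ = ‖π‖ * C * (lam + ε) * ‖u‖ := by rw [hBdef]; ring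
end
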